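/- Let H be a Hardy field containing ℒℰ and let f ∈ H be strongly non-polynomial with t^δ ≪ f(t) for some δ > 0. Then for all sufficiently large natural numbers k the class S(f,k) is non-empty. -/

import Mathlib

open Filter MeasureTheory Topology

noncomputable section

/-- `f ≺ g` : `f(t)/g(t) → 0` as `t → +∞`. -/
def Prec (f g : ℝ → ℝ) : Prop :=
  Filter.Tendsto (fun t => f t / g t) Filter.atTop (nhds 0)

/-- `f ≪ g` : `|f(t)| ≤ C |g(t)|` for some constant `C > 0` and all large `t`. -/
def Dom (f g : ℝ → ℝ) : Prop :=
  ∃ C : ℝ, 0 < C ∧ ∀ᶠ t in Filter.atTop, |f t| ≤ C * |g t|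

/-- `f` has polynomial growth: `f(t)/t^k → 0` for some positive integer `k`. -/
def PolyGrowth (f : ℝ → ℝ) : Prop :=
  ∃ k : ℕ, 0 < k ∧ Filter.Tendsto (fun t => f t / t ^ k) Filter.atTop (nhds 0)

/-- The logarithmico-exponential functions of Hardy: built from constants and the
identity by `+`, `-`, `*`, `/`, `exp`, `log` and composition. -/
inductive IsLE : (ℝ → ℝ) → Prop
  | const (c : ℝ) : IsLE fun _ => c
  | id : IsLE fun t => t
  | add {f g} : IsLE f → IsLE g → IsLE (f + g)
  | sub {f g} : IsLE f → IsLE g → IsLE (f - g)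
  | mul {f g} : IsLE f → IsLE g → IsLE (f * g)
  | div {f g} : IsLE f → IsLE g → IsLE (f / g)
  | exp {f} : IsLE f → IsLE fun t => Real.exp (f t)
  | log {f} : IsLE f → IsLE fun t => Real.log (f t)
  | comp {f g} : IsLE f → IsLE g → IsLE (f ∘ g)

/-- A Hardy field: a collection of (representatives of) germs at `+∞` of real functions,
closed under germ equality, forming a field under pointwise operations, and closed under
differentiation (each element is eventually differentiable, with derivative again in `H`). -/
structure IsHardyField (H : Set (ℝ → ℝ)) : Prop where
  mem_congr : ∀ {f g : ℝ → ℝ}, f ∈ H → f =ᶠ[Filter.atTop] g → g ∈ H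
  zero_mem : (fun _ : ℝ => (0 : ℝ)) ∈ H
  one_mem : (fun _ : ℝ => (1 : ℝ)) ∈ H
  add_mem : ∀ {f g : ℝ → ℝ}, f ∈ H → g ∈ H → f + g ∈ H
  neg_mem : ∀ {f : ℝ → ℝ}, f ∈ H → -f ∈ H
  mul_mem : ∀ {f g : ℝ → ℝ}, f ∈ H → g ∈ H → f * g ∈ H
  inv_mem : ∀ {f : ℝ → ℝ}, f ∈ H → ¬ (f =ᶠ[Filter.atTop] fun _ => (0 : ℝ)) →
    (fun t => (f t)⁻¹) ∈ H
  eventuallyDifferentiable : ∀ {f : ℝ → ℝ}, f ∈ H →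
    ∀ᶠ t in Filter.atTop, DifferentiableAt ℝ f t
  deriv_mem : ∀ {f : ℝ → ℝ}, f ∈ H → deriv f ∈ H

/-- `H` contains (the germs of) all logarithmico-exponential functions. -/
def ContainsLE (H : Set (ℝ → ℝ)) : Prop := ∀ f : ℝ → ℝ, IsLE f → f ∈ H

/-- strongly non-polynomial: `t^k ≺ f ≺ t^{k+1}` for some `k ∈ ℕ`, or `f(t) → 0`. -/
def StronglyNonPoly (f : ℝ → ℝ) : Prop :=
  (∃ k : ℕ, Prec (fun t => t ^ k) f ∧ Prec f fun t => t ^ (k + 1)) ∨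
    Filter.Tendsto f Filter.atTop (nhds 0)


/-- The class `S(f,k)`: all `g ∈ H` with `g(t) ≺ t`, such that the limit of
`g(t)·|f⁽ᵏ⁾(t)|^{1/k}` as `t → +∞` is nonzero (possibly `±∞`), and
`g(t) ≺ |f⁽ᵏ⁺¹⁾(t)|^{-1/(k+1)}`. -/
def SClass (H : Set (ℝ → ℝ)) (f : ℝ → ℝ) (k : ℕ) : Set (ℝ → ℝ) :=
  {g | g ∈ H ∧ Prec g (fun t => t) ∧
    ((∃ c : ℝ, c ≠ 0 ∧ Filter.Tendsto
        (fun t => g t * |iteratedDeriv k f t| ^ ((k : ℝ)⁻¹)) Filter.atTop (nhds c)) ∨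
      Filter.Tendsto (fun t => g t * |iteratedDeriv k f t| ^ ((k : ℝ)⁻¹))
        Filter.atTop Filter.atTop ∨
      Filter.Tendsto (fun t => g t * |iteratedDeriv k f t| ^ ((k : ℝ)⁻¹))
        Filter.atTop Filter.atBot) ∧
    Prec g fun t => |iteratedDeriv (k + 1) f t| ^ (-(1 : ℝ) / (k + 1))}

/-- `t ^ b` as an everywhere-defined smooth-at-infinity function. -/
def powFn (b : ℝ) : ℝ → ℝ := fun t => Real.exp (Real.log t * b)

lemma powFn_pos (b t : ℝ) : 0 < powFn b t := Real.exp_pos _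

lemma powFn_eq_rpow {t : ℝ} (ht : 0 < t) (b : ℝ) : powFn b t = t ^ b := by
  rw [Real.rpow_def_of_pos ht]; rfl

lemma powFn_add (a b t : ℝ) : powFn (a + b) t = powFn a t * powFn b t := by
  unfold powFn; rw [mul_add, Real.exp_add]

lemma powFn_one {t : ℝ} (ht : 0 < t) : powFn 1 t = t := by
  unfold powFn; rw [mul_one, Real.exp_log ht]

lemma powFn_zero (t : ℝ) : powFn 0 t = 1 := by
  unfold powFn; rw [mul_zero, Real.exp_zero]

lemma powFn_le_powFn {a b t : ℝ} (ht : 1 ≤ t) (hab : a ≤ b) : powFn a t ≤ powFn b t := by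
  unfold powFn; exact Real.exp_le_exp.2 (by nlinarith [Real.log_nonneg ht])

lemma powFn_rpow (a c t : ℝ) : (powFn a t) ^ c = powFn (a * c) t := by
  unfold powFn
  rw [Real.rpow_def_of_pos (Real.exp_pos _), Real.log_exp, mul_assoc]

lemma powFn_tendsto_atTop {b : ℝ} (hb : 0 < b) : Tendsto (powFn b) atTop atTop := by
  exact Real.tendsto_exp_atTop.comp ((Real.tendsto_log_atTop).atTop_mul_const hb)

lemma powFn_tendsto_zero {b : ℝ} (hb : b < 0) : Tendsto (powFn b) atTop (nhds 0) := by
  exact Real.tendsto_exp_atBot.comp ((Real.tendsto_log_atTop).atTop_mul_const_of_neg hb)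

lemma powFn_hasDerivAt {t : ℝ} (ht : 0 < t) (b : ℝ) :
    HasDerivAt (powFn b) (b * powFn (b - 1) t) t := by
  have h1 : HasDerivAt (fun t : ℝ => Real.log t * b) (t⁻¹ * b) t :=
    (Real.hasDerivAt_log (ne_of_gt ht)).mul_const b
  have h2 := h1.exp
  refine h2.congr_deriv ?_
  have : powFn (b-1) t = powFn b t * t⁻¹ := by
    rw [show b - 1 = b + (-1) from by ring, powFn_add]
    congr 1
    unfold powFn
    rw [mul_neg_one, Real.exp_neg, Real.exp_log ht]
  rw [this]; unfold powFn; ring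

lemma powFn_natCast {t : ℝ} (ht : 0 < t) (n : ℕ) : powFn n t = t ^ n := by
  rw [powFn_eq_rpow ht, Real.rpow_natCast]

lemma Dom.trans {f g h : ℝ → ℝ} (h1 : Dom f g) (h2 : Dom g h) : Dom f h := by
  obtain ⟨C, hC, hev⟩ := h1; obtain ⟨D, hD, hev'⟩ := h2
  exact ⟨C * D, by positivity, by filter_upwards [hev, hev'] with t h1 h2; nlinarith [abs_nonneg (f t)]⟩

lemma dom_powFn_of_le {a b : ℝ} (hab : a ≤ b) : Dom (powFn a) (powFn b) := by
  refine ⟨1, one_pos, ?_⟩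
  filter_upwards [eventually_ge_atTop (1:ℝ)] with t ht
  rw [abs_of_pos (powFn_pos a t), abs_of_pos (powFn_pos b t), one_mul]
  exact powFn_le_powFn ht hab

lemma le_of_dom_powFn {a b : ℝ} (h : Dom (powFn a) (powFn b)) : a ≤ b := by
  by_contra hab
  push_neg at hab
  obtain ⟨C, hC, hev⟩ := h
  have h2 : Tendsto (powFn (a - b)) atTop atTop := powFn_tendsto_atTop (by linarith)
  have h3 : ∀ᶠ t in atTop, powFn (a-b) t ≤ C := by
    filter_upwards [hev] with t ht
    rw [abs_of_pos (powFn_pos a t), abs_of_pos (powFn_pos b t)] at ht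
    have : powFn (a-b) t * powFn b t = powFn a t := by rw [← powFn_add]; ring_nf
    nlinarith [powFn_pos b t, powFn_pos (a-b) t]
  obtain ⟨t, ht1, ht2⟩ := ((h2.eventually_ge_atTop (C+1)).and h3).exists
  linarith

variable {H : Set (ℝ → ℝ)}

lemma IsHardyField.eventuallyCont (hH : IsHardyField H) {h : ℝ → ℝ} (hh : h ∈ H) :
    ∀ᶠ t in atTop, ContinuousAt h t := by
  filter_upwards [hH.eventuallyDifferentiable hh] with t ht using ht.continuousAt

/-- Core dichotomy: an element of a Hardy field is either eventually zero or
eventually nonzero. -/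
lemma IsHardyField.ev_zero_or_ev_ne_zero (hH : IsHardyField H) {h : ℝ → ℝ} (hh : h ∈ H) :
    h =ᶠ[atTop] (fun _ => (0:ℝ)) ∨ ∀ᶠ t in atTop, h t ≠ 0 := by
  by_cases h0 : h =ᶠ[atTop] (fun _ => (0:ℝ))
  · exact Or.inl h0
  right
  by_contra hne
  have hfreq0 : ∃ᶠ t in atTop, h t = 0 := by
    rw [Filter.not_eventually] at hne; simpa using hne
  have hfreqne : ∃ᶠ t in atTop, h t ≠ 0 := by
    rw [Filter.EventuallyEq] at h0
    rw [Filter.not_eventually] at h0; simpa using h0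
  have hinv : (fun t => (h t)⁻¹) ∈ H := hH.inv_mem hh h0
  obtain ⟨T, hT⟩ := Filter.eventually_atTop.1
    ((hH.eventuallyCont hh).and (hH.eventuallyCont hinv))
  obtain ⟨s, hs, hsT⟩ := (hfreqne.and_eventually (eventually_ge_atTop T)).exists
  obtain ⟨t₀, ht₀, ht₀s⟩ := (hfreq0.and_eventually (eventually_ge_atTop (s+1))).exists
  have hst₀ : s < t₀ := by linarith
  set Z : Set ℝ := Set.Icc s t₀ ∩ h ⁻¹' {0} with hZ
  have hcont : ContinuousOn h (Set.Icc s t₀) := fun x hx =>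
    ((hT x (le_trans hsT hx.1)).1).continuousWithinAt
  have hcls : IsClosed Z := hcont.preimage_isClosed_of_isClosed isClosed_Icc isClosed_singleton
  have hZne : Z.Nonempty := ⟨t₀, ⟨le_of_lt hst₀, le_refl _⟩, ht₀⟩
  have hbdd : BddBelow Z := ⟨s, fun x hx => hx.1.1⟩
  set u := sInf Z with hu
  have huZ : u ∈ Z := hcls.csInf_mem hZne hbdd
  have hsu : s < u := lt_of_le_of_ne huZ.1.1 (by intro he; exact hs (by rw [he]; exact huZ.2))
  have hbefore : ∀ x, s ≤ x → x < u → h x ≠ 0 := by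
    intro x hx1 hx2 hx0
    have : x ∈ Z := ⟨⟨hx1, le_trans hx2.le huZ.1.2⟩, hx0⟩
    exact absurd (csInf_le hbdd this) (not_le.2 hx2)
  have huT : T ≤ u := le_trans hsT hsu.le
  have hcu : ContinuousAt h u := (hT u huT).1
  have hcu' : ContinuousAt (fun t => (h t)⁻¹) u := (hT u huT).2
  have hu0 : h u = 0 := huZ.2
  have ev1 : ∀ᶠ x in nhds u, |h x| < 2⁻¹ := by
    have := hcu.tendsto
    rw [hu0] at this
    have := this (Metric.ball_mem_nhds (0:ℝ) (by norm_num : (0:ℝ) < 2⁻¹))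
    filter_upwards [this] with x hx
    simpa [Real.dist_eq] using hx
  have ev2 : ∀ᶠ x in nhds u, |h x|⁻¹ < 1 := by
    have := hcu'.tendsto
    rw [hu0, inv_zero] at this
    have := this (Metric.ball_mem_nhds (0:ℝ) one_pos)
    filter_upwards [this] with x hx
    simpa [Real.dist_eq] using hx
  obtain ⟨ε, hε, hball⟩ := Metric.eventually_nhds_iff_ball.1 (ev1.and ev2)
  set x := max s (u - ε/2) with hx
  have hxu : x < u := by
    apply max_lt hsu; linarith
  have hxball : x ∈ Metric.ball u ε := by
    simp only [Metric.mem_ball, Real.dist_eq]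
    rw [abs_of_neg (by linarith : x - u < 0)]
    have : u - ε/2 ≤ x := le_max_right _ _
    linarith
  obtain ⟨hb1, hb2⟩ := hball x hxball
  have hhx : h x ≠ 0 := hbefore x (le_max_left _ _) hxu
  have hpos : 0 < |h x| := abs_pos.2 hhx
  nlinarith [mul_inv_cancel₀ (ne_of_gt hpos), inv_pos.2 hpos]

/-- Sign trichotomy in a Hardy field. -/
lemma IsHardyField.sign_trichotomy (hH : IsHardyField H) {h : ℝ → ℝ} (hh : h ∈ H) :
    (∀ᶠ t in atTop, 0 < h t) ∨ (∀ᶠ t in atTop, h t < 0) ∨ h =ᶠ[atTop] (fun _ => (0:ℝ)) := by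
  rcases hH.ev_zero_or_ev_ne_zero hh with h0 | hne
  · exact Or.inr (Or.inr h0)
  obtain ⟨T, hT⟩ := Filter.eventually_atTop.1 (hne.and (hH.eventuallyCont hh))
  have hcont : ContinuousOn h (Set.Ici T) := fun x hx => ((hT x hx).2).continuousWithinAt
  have key : ∀ t ≥ T, ∀ s ≥ T, 0 < h t → h s < 0 → False := by
    intro t ht s hs hht hhs
    rcases le_total t s with hts | hst
    · have := intermediate_value_Icc' hts (hcont.mono (fun x hx => le_trans ht hx.1))
      obtain ⟨x, hx, hx0⟩ := this ⟨hhs.le, hht.le⟩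
      exact (hT x (le_trans ht hx.1)).1 hx0
    · have := intermediate_value_Icc hst (hcont.mono (fun x hx => le_trans hs hx.1))
      obtain ⟨x, hx, hx0⟩ := this ⟨hhs.le, hht.le⟩
      exact (hT x (le_trans hs hx.1)).1 hx0
  rcases lt_or_gt_of_ne (hT T le_rfl).1 with hneg | hpos
  · right; left
    filter_upwards [eventually_ge_atTop T] with t ht
    rcases lt_or_gt_of_ne (hT t ht).1 with h' | h'
    · exact h'
    · exact absurd (key t ht T le_rfl h' hneg) (fun x => x)
  · left
    filter_upwards [eventually_ge_atTop T] with t ht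
    rcases lt_or_gt_of_ne (hT t ht).1 with h' | h'
    · exact absurd (key T le_rfl t ht hpos h') (fun x => x)
    · exact h'

/-- Every element of a Hardy field has a limit in `ℝ ∪ {±∞}`. -/
lemma IsHardyField.limit_exists (hH : IsHardyField H) {h : ℝ → ℝ} (hh : h ∈ H) :
    Tendsto h atTop atTop ∨ Tendsto h atTop atBot ∨ ∃ c, Tendsto h atTop (nhds c) := by
  have hd : deriv h ∈ H := hH.deriv_mem hh
  have hdiff := hH.eventuallyDifferentiable hh
  -- monotone or antitone on a tail
  have hmono : ∃ T, MonotoneOn h (Set.Ici T) ∨ AntitoneOn h (Set.Ici T) := by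
    rcases hH.sign_trichotomy hd with hp | hn | h0
    · obtain ⟨T, hT⟩ := Filter.eventually_atTop.1 (hp.and hdiff)
      refine ⟨T, Or.inl (monotoneOn_of_deriv_nonneg (convex_Ici T)
        (fun x hx => ((hT x hx).2).continuousAt.continuousWithinAt)
        (fun x hx => ((hT x (le_of_lt (by simpa using hx))).2).differentiableWithinAt)
        (fun x hx => (le_of_lt (hT x (le_of_lt (by simpa using hx))).1)))⟩
    · obtain ⟨T, hT⟩ := Filter.eventually_atTop.1 (hn.and hdiff)
      refine ⟨T, Or.inr (antitoneOn_of_deriv_nonpos (convex_Ici T)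
        (fun x hx => ((hT x hx).2).continuousAt.continuousWithinAt)
        (fun x hx => ((hT x (le_of_lt (by simpa using hx))).2).differentiableWithinAt)
        (fun x hx => (le_of_lt (hT x (le_of_lt (by simpa using hx))).1)))⟩
    · obtain ⟨T, hT⟩ := Filter.eventually_atTop.1 (h0.and hdiff)
      refine ⟨T, Or.inl (monotoneOn_of_deriv_nonneg (convex_Ici T)
        (fun x hx => ((hT x hx).2).continuousAt.continuousWithinAt)
        (fun x hx => ((hT x (le_of_lt (by simpa using hx))).2).differentiableWithinAt)
        (fun x hx => le_of_eq ((hT x (le_of_lt (by simpa using hx))).1).symm))⟩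
  obtain ⟨T, hT⟩ := hmono
  have heq : (fun t => h (max t T)) =ᶠ[atTop] h := by
    filter_upwards [eventually_ge_atTop T] with t ht
    rw [max_eq_left ht]
  rcases hT with hm | hm
  · have : Monotone (fun t => h (max t T)) := fun s t hst =>
      hm (Set.mem_Ici.2 (le_max_right _ _)) (Set.mem_Ici.2 (le_max_right _ _)) (max_le_max hst le_rfl)
    rcases tendsto_of_monotone this with h1 | ⟨l, h1⟩
    · exact Or.inl (h1.congr' heq)
    · exact Or.inr (Or.inr ⟨l, h1.congr' heq⟩)
  · have : Monotone (fun t => -h (max t T)) := fun s t hst =>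
      neg_le_neg (hm (Set.mem_Ici.2 (le_max_right _ _)) (Set.mem_Ici.2 (le_max_right _ _)) (max_le_max hst le_rfl))
    rcases tendsto_of_monotone this with h1 | ⟨l, h1⟩
    · refine Or.inr (Or.inl ?_)
      have h2 : Tendsto (fun t => h (max t T)) atTop atBot := by
        rw [show (fun t => h (max t T)) = fun t => -(-h (max t T)) from by funext t; ring]
        exact tendsto_neg_atTop_atBot.comp h1
      exact h2.congr' heq
    · refine Or.inr (Or.inr ⟨-l, ?_⟩)
      have h2 : Tendsto (fun t => h (max t T)) atTop (nhds (-l)) := by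
        have := h1.neg
        simpa using this
      exact h2.congr' heq
lemma powFn_isLE (b : ℝ) : IsLE (powFn b) :=
  IsLE.exp (IsLE.mul (IsLE.log IsLE.id) (IsLE.const b))

lemma powFn_mem (hLE : ContainsLE H) (b : ℝ) : powFn b ∈ H := hLE _ (powFn_isLE b)

lemma IsHardyField.small_or_bounded_below (hH : IsHardyField H) {h : ℝ → ℝ} (hh : h ∈ H) :
    Tendsto h atTop (nhds 0) ∨ ∃ c > (0:ℝ), ∀ᶠ t in atTop, c ≤ |h t| := by
  rcases hH.limit_exists hh with h1 | h1 | ⟨c, h1⟩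
  · refine Or.inr ⟨1, one_pos, ?_⟩
    filter_upwards [h1.eventually_ge_atTop 1] with t ht
    exact le_trans ht (le_abs_self _)
  · refine Or.inr ⟨1, one_pos, ?_⟩
    filter_upwards [h1.eventually_le_atBot (-1)] with t ht
    have h2 : (1:ℝ) ≤ -h t := by linarith
    exact le_trans h2 (neg_le_abs _)
  · rcases eq_or_ne c 0 with rfl | hc
    · exact Or.inl h1
    · refine Or.inr ⟨|c|/2, by positivity, ?_⟩
      have h2 : Tendsto (fun t => |h t|) atTop (nhds |c|) := h1.abs
      exact h2.eventually (eventually_ge_nhds (half_lt_self (abs_pos.2 hc)))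

lemma IsHardyField.mul_inv_powFn_mem (hH : IsHardyField H) (hLE : ContainsLE H)
    {h : ℝ → ℝ} (hh : h ∈ H) (b : ℝ) : (fun t => h t * (powFn b t)⁻¹) ∈ H := by
  have h1 : (fun t => (powFn b t)⁻¹) ∈ H := by
    refine hH.inv_mem (powFn_mem hLE b) ?_
    intro hev
    obtain ⟨t, ht⟩ := hev.exists
    exact absurd ht (ne_of_gt (powFn_pos b t))
  exact hH.mul_mem hh h1

/-- Comparison trichotomy against powers. -/
lemma IsHardyField.dom_trichotomy (hH : IsHardyField H) (hLE : ContainsLE H)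
    {h : ℝ → ℝ} (hh : h ∈ H) (b : ℝ) : Dom (powFn b) h ∨ Dom h (powFn b) := by
  set r := fun t => h t * (powFn b t)⁻¹ with hr
  rcases hH.small_or_bounded_below (hH.mul_inv_powFn_mem hLE hh b) with h1 | ⟨c, hc, h1⟩
  · right
    refine ⟨1, one_pos, ?_⟩
    have h1' : Tendsto (fun t => |r t|) atTop (nhds 0) := by simpa [hr] using h1.abs
    filter_upwards [h1'.eventually_le_const one_pos] with t ht
    have hp := powFn_pos b t
    rw [abs_mul, abs_inv, abs_of_pos hp] at ht
    rw [abs_of_pos hp, one_mul]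
    calc |h t| = |h t| * (powFn b t)⁻¹ * powFn b t := by field_simp
    _ ≤ 1 * powFn b t := by nlinarith [abs_nonneg (h t)]
    _ = powFn b t := one_mul _
  · left
    refine ⟨c⁻¹, by positivity, ?_⟩
    filter_upwards [h1] with t ht
    have hp := powFn_pos b t
    rw [abs_mul, abs_inv, abs_of_pos hp] at ht
    rw [abs_of_pos hp]
    have h2 : c * powFn b t ≤ |h t| := by
      have h3 := mul_le_mul_of_nonneg_right ht hp.le
      rwa [mul_assoc, inv_mul_cancel₀ (ne_of_gt hp), mul_one] at h3
    calc powFn b t = c⁻¹ * (c * powFn b t) := by field_simp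
    _ ≤ c⁻¹ * |h t| := mul_le_mul_of_nonneg_left h2 (inv_pos.2 hc).le

lemma IsHardyField.iteratedDeriv_mem (hH : IsHardyField H) {f : ℝ → ℝ} (hf : f ∈ H) (k : ℕ) :
    iteratedDeriv k f ∈ H := by
  induction k with
  | zero => simpa [iteratedDeriv_zero] using hf
  | succ n ih => rw [iteratedDeriv_succ]; exact hH.deriv_mem ih

lemma powFn_mul_arg (b : ℝ) {c t : ℝ} (hc : 0 < c) (ht : 0 < t) :
    powFn b (c * t) = Real.exp (Real.log c * b) * powFn b t := by
  unfold powFn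
  rw [Real.log_mul (ne_of_gt hc) (ne_of_gt ht), add_mul, Real.exp_add]

lemma powFn_succ {t : ℝ} (ht : 0 < t) (b : ℝ) : powFn b t = powFn (b-1) t * t := by
  conv_lhs => rw [show b = (b-1) + 1 from by ring, powFn_add, powFn_one ht]

/-- Elements of a Hardy field are eventually monotone or antitone. -/
lemma IsHardyField.ev_mono (hH : IsHardyField H) {h : ℝ → ℝ} (hh : h ∈ H) :
    ∃ T, MonotoneOn h (Set.Ici T) ∨ AntitoneOn h (Set.Ici T) := by
  have hdiff := hH.eventuallyDifferentiable hh
  rcases hH.sign_trichotomy (hH.deriv_mem hh) with hp | hn | h0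
  · obtain ⟨T, hT⟩ := Filter.eventually_atTop.1 (hp.and hdiff)
    refine ⟨T, Or.inl (monotoneOn_of_deriv_nonneg (convex_Ici T)
      (fun x hx => ((hT x hx).2).continuousAt.continuousWithinAt)
      (fun x hx => ((hT x (le_of_lt (by simpa using hx))).2).differentiableWithinAt)
      (fun x hx => (le_of_lt (hT x (le_of_lt (by simpa using hx))).1)))⟩
  · obtain ⟨T, hT⟩ := Filter.eventually_atTop.1 (hn.and hdiff)
    refine ⟨T, Or.inr (antitoneOn_of_deriv_nonpos (convex_Ici T)
      (fun x hx => ((hT x hx).2).continuousAt.continuousWithinAt)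
      (fun x hx => ((hT x (le_of_lt (by simpa using hx))).2).differentiableWithinAt)
      (fun x hx => (le_of_lt (hT x (le_of_lt (by simpa using hx))).1)))⟩
  · obtain ⟨T, hT⟩ := Filter.eventually_atTop.1 (h0.and hdiff)
    refine ⟨T, Or.inl (monotoneOn_of_deriv_nonneg (convex_Ici T)
      (fun x hx => ((hT x hx).2).continuousAt.continuousWithinAt)
      (fun x hx => ((hT x (le_of_lt (by simpa using hx))).2).differentiableWithinAt)
      (fun x hx => le_of_eq ((hT x (le_of_lt (by simpa using hx))).1).symm))⟩

/-- From `h ≪ t^b` deduce `h' ≪ t^(b-1)`, inside a Hardy field. -/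
lemma IsHardyField.deriv_dom (hH : IsHardyField H) {h : ℝ → ℝ} (hh : h ∈ H)
    {b : ℝ} (hdom : Dom h (powFn b)) : Dom (deriv h) (powFn (b - 1)) := by
  obtain ⟨C, hC, hev⟩ := hdom
  obtain ⟨T₁, hT₁⟩ := hH.ev_mono (hH.deriv_mem hh)
  obtain ⟨T₂, hT₂⟩ := Filter.eventually_atTop.1 (hev.and (hH.eventuallyDifferentiable hh))
  set T := max 1 (max T₁ T₂) with hT
  have hT0 : (1:ℝ) ≤ T := le_max_left _ _
  set c₂ := Real.exp (-(Real.log 2) * b) with hc₂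
  set c₃ := Real.exp (Real.log 2 * b) with hc₃
  set K := 2*C*(1 + c₂) + C*(1 + c₃) with hK
  have hc₂0 : 0 < c₂ := Real.exp_pos _
  have hc₃0 : 0 < c₃ := Real.exp_pos _
  refine ⟨K, by positivity, ?_⟩
  filter_upwards [eventually_ge_atTop (2*T)] with t ht
  have ht2 : T ≤ t/2 := by linarith
  have htpos : 0 < t := by linarith
  have htT : T ≤ t := by linarith
  have h2tT : T ≤ 2*t := by linarith
  -- bounds on h at t/2, t, 2t
  have hb : ∀ s, T ≤ s → |h s| ≤ C * powFn b s := by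
    intro s hs
    have := (hT₂ s (le_trans (le_max_right _ _) (le_trans (le_max_right _ _) hs))).1
    rwa [abs_of_pos (powFn_pos b s)] at this
  have hdiffs : ∀ s, T ≤ s → DifferentiableAt ℝ h s := fun s hs =>
    (hT₂ s (le_trans (le_max_right _ _) (le_trans (le_max_right _ _) hs))).2
  -- powFn at t/2 and 2t
  have hhalf : powFn b (t/2) = c₂ * powFn b t := by
    have : t/2 = (2:ℝ)⁻¹ * t := by ring
    rw [this, powFn_mul_arg b (by norm_num) htpos, Real.log_inv]
  have hdouble : powFn b (2*t) = c₃ * powFn b t := by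
    rw [powFn_mul_arg b (by norm_num) htpos]
  -- MVT on [t/2, t]
  have hmvt1 : ∃ ξ ∈ Set.Ioo (t/2) t, deriv h ξ = (h t - h (t/2)) / (t - t/2) := by
    apply exists_deriv_eq_slope h (by linarith : t/2 < t)
    · intro x hx
      exact (hdiffs x (le_trans ht2 hx.1)).continuousAt.continuousWithinAt
    · intro x hx
      exact (hdiffs x (le_trans ht2 hx.1.le)).differentiableWithinAt
  have hmvt2 : ∃ ξ ∈ Set.Ioo t (2*t), deriv h ξ = (h (2*t) - h t) / (2*t - t) := by
    apply exists_deriv_eq_slope h (by linarith : t < 2*t)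
    · intro x hx
      exact (hdiffs x (le_trans htT hx.1)).continuousAt.continuousWithinAt
    · intro x hx
      exact (hdiffs x (le_trans htT hx.1.le)).differentiableWithinAt
  obtain ⟨ξ₁, hξ₁, hs₁⟩ := hmvt1
  obtain ⟨ξ₂, hξ₂, hs₂⟩ := hmvt2
  have hp1 : 0 < powFn (b-1) t := powFn_pos _ _
  have hpowsucc := powFn_succ htpos b
  -- |slope| bounds
  have hb1 : |deriv h ξ₁| ≤ K * powFn (b-1) t := by
    rw [hs₁]
    rw [abs_div, abs_of_pos (by linarith : (0:ℝ) < t - t/2)]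
    have e1 : |h t - h (t/2)| ≤ C * powFn b t + C * (c₂ * powFn b t) := by
      calc |h t - h (t/2)| ≤ |h t| + |h (t/2)| := abs_sub _ _
      _ ≤ C * powFn b t + C * powFn b (t/2) := add_le_add (hb t htT) (hb _ ht2)
      _ = _ := by rw [hhalf]
    rw [div_le_iff₀ (by linarith : (0:ℝ) < t - t/2)]
    have : K * powFn (b-1) t * (t - t/2) = (C*(1+c₂)) * (powFn (b-1) t * t) + (K*(t-t/2) - C*(1+c₂)*t) * powFn (b-1) t := by ring
    rw [this, ← hpowsucc]
    have h2 : 0 ≤ (K*(t-t/2) - C*(1+c₂)*t) * powFn (b-1) t := by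
      apply mul_nonneg _ hp1.le
      have : K*(t-t/2) - C*(1+c₂)*t = (C*(1+c₃)/2)*t := by rw [hK]; ring
      rw [this]; positivity
    nlinarith
  have hb2 : |deriv h ξ₂| ≤ K * powFn (b-1) t := by
    rw [hs₂]
    rw [abs_div, abs_of_pos (by linarith : (0:ℝ) < 2*t - t)]
    have e1 : |h (2*t) - h t| ≤ C * (c₃ * powFn b t) + C * powFn b t := by
      calc |h (2*t) - h t| ≤ |h (2*t)| + |h t| := abs_sub _ _
      _ ≤ C * powFn b (2*t) + C * powFn b t := add_le_add (hb _ h2tT) (hb t htT)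
      _ = _ := by rw [hdouble]
    rw [div_le_iff₀ (by linarith : (0:ℝ) < 2*t - t)]
    have : K * powFn (b-1) t * (2*t - t) = (C*(1+c₃)) * (powFn (b-1) t * t) + (K*(2*t-t) - C*(1+c₃)*t) * powFn (b-1) t := by ring
    rw [this, ← hpowsucc]
    have h2 : 0 ≤ (K*(2*t-t) - C*(1+c₃)*t) * powFn (b-1) t := by
      apply mul_nonneg _ hp1.le
      have : K*(2*t-t) - C*(1+c₃)*t = (2*C*(1+c₂))*t := by rw [hK]; ring
      rw [this]; positivity
    nlinarith
  -- combine via monotonicity of deriv h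
  rw [abs_of_pos (powFn_pos (b-1) t)]
  have hmem1 : ξ₁ ∈ Set.Ici T₁ := by
    have : T₁ ≤ T := le_trans (le_max_left _ _) (le_max_right _ _)
    exact le_trans this (le_trans ht2 hξ₁.1.le)
  have hmem2 : t ∈ Set.Ici T₁ := by
    have : T₁ ≤ T := le_trans (le_max_left _ _) (le_max_right _ _)
    exact le_trans this htT
  have hmem3 : ξ₂ ∈ Set.Ici T₁ := by
    have : T₁ ≤ T := le_trans (le_max_left _ _) (le_max_right _ _)
    exact le_trans this (le_trans htT hξ₂.1.le)
  rw [abs_le]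
  rcases hT₁ with hmono | hanti
  · have l1 : deriv h ξ₁ ≤ deriv h t := hmono hmem1 hmem2 hξ₁.2.le
    have l2 : deriv h t ≤ deriv h ξ₂ := hmono hmem2 hmem3 hξ₂.1.le
    constructor
    · have := (abs_le.1 hb1).1; linarith
    · have := (abs_le.1 hb2).2; linarith
  · have l1 : deriv h ξ₂ ≤ deriv h t := hanti hmem2 hmem3 hξ₂.1.le
    have l2 : deriv h t ≤ deriv h ξ₁ := hanti hmem1 hmem2 hξ₁.2.le
    constructor
    · have := (abs_le.1 hb2).1; linarith
    · have := (abs_le.1 hb1).2; linarith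

lemma powFn_differentiableAt {t : ℝ} (ht : 0 < t) (b : ℝ) :
    DifferentiableAt ℝ (powFn b) t := (powFn_hasDerivAt ht b).differentiableAt

lemma antitoneOn_sub_antideriv {h : ℝ → ℝ} {a b T : ℝ} (hb : b + 1 ≠ 0) (hT : 0 < T)
    (hdiff : ∀ t ∈ Set.Ici T, DifferentiableAt ℝ h t)
    (hbound : ∀ t ∈ Set.Ioi T, deriv h t ≤ a * powFn b t) :
    AntitoneOn (fun t => h t - (a/(b+1)) * powFn (b+1) t) (Set.Ici T) := by
  have hΦ : ∀ x : ℝ, 0 < x → HasDerivAt (fun t => (a/(b+1)) * powFn (b+1) t)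
      (a * powFn b x) x := by
    intro x hx
    have := (powFn_hasDerivAt hx (b+1)).const_mul (a/(b+1))
    refine this.congr_deriv ?_
    rw [show b + 1 - 1 = b from by ring, ← mul_assoc, div_mul_cancel₀ _ hb]
  apply antitoneOn_of_deriv_nonpos (convex_Ici T)
  · intro x hx
    exact ((hdiff x hx).sub (hΦ x (lt_of_lt_of_le hT hx)).differentiableAt).continuousAt.continuousWithinAt
  · intro x hx
    rw [interior_Ici] at hx
    exact ((hdiff x (Set.mem_Ici.2 (le_of_lt hx))).sub
      (hΦ x (lt_trans hT hx)).differentiableAt).differentiableWithinAt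
  · intro x hx
    rw [interior_Ici] at hx
    have hd : HasDerivAt (fun t => h t - (a/(b+1)) * powFn (b+1) t)
        (deriv h x - a * powFn b x) x :=
      ((hdiff x (Set.mem_Ici.2 (le_of_lt hx))).hasDerivAt).sub (hΦ x (lt_trans hT hx))
    rw [hd.deriv]
    have := hbound x hx
    linarith

lemma monotoneOn_sub_antideriv {h : ℝ → ℝ} {a b T : ℝ} (hb : b + 1 ≠ 0) (hT : 0 < T)
    (hdiff : ∀ t ∈ Set.Ici T, DifferentiableAt ℝ h t)
    (hbound : ∀ t ∈ Set.Ioi T, a * powFn b t ≤ deriv h t) :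
    MonotoneOn (fun t => h t - (a/(b+1)) * powFn (b+1) t) (Set.Ici T) := by
  have := antitoneOn_sub_antideriv (h := fun t => -h t) (a := -a) hb hT
    (fun t ht => (hdiff t ht).neg) ?_
  · intro s hs t ht hst
    have h2 := this hs ht hst
    simp only [neg_div, neg_mul, sub_neg_eq_add, neg_add_rev] at h2 ⊢
    nlinarith [h2]
  · intro t ht
    have h1 : deriv (fun t => -h t) t = -deriv h t := by
      exact deriv.neg
    rw [h1]
    have := hbound t ht
    nlinarith

/-- If `|h'| ≤ C t^b` on a tail with `b > -1` then `|h| ≤ K + C' t^(b+1)`. -/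
lemma abs_le_of_deriv_le {h : ℝ → ℝ} {C b T : ℝ} (hC : 0 < C) (hb : 0 < b + 1) (hT : 0 < T)
    (hdiff : ∀ t ∈ Set.Ici T, DifferentiableAt ℝ h t)
    (hbound : ∀ t ∈ Set.Ici T, |deriv h t| ≤ C * powFn b t) :
    ∀ t ≥ T, |h t| ≤ (|h T| + (C/(b+1)) * powFn (b+1) T) + (C/(b+1)) * powFn (b+1) t := by
  have hb' : b + 1 ≠ 0 := ne_of_gt hb
  have hup := antitoneOn_sub_antideriv (a := C) hb' hT hdiff
    (fun t ht => (abs_le.1 (hbound t (Set.mem_Ici.2 (le_of_lt ht)))).2)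
  have hlo := monotoneOn_sub_antideriv (a := -C) hb' hT hdiff
    (fun t ht => by
      have := (abs_le.1 (hbound t (Set.mem_Ici.2 (le_of_lt ht)))).1
      nlinarith [this])
  intro t ht
  have h1 := hup (Set.self_mem_Ici) (show t ∈ Set.Ici T from ht) ht
  have h2 := hlo (Set.self_mem_Ici) (show t ∈ Set.Ici T from ht) ht
  simp only at h1 h2
  have hpT : 0 < powFn (b+1) T := powFn_pos _ _
  have hpt : 0 < powFn (b+1) t := powFn_pos _ _
  have hcb : 0 < C/(b+1) := by positivity
  have e2 : -C / (b+1) * powFn (b+1) T = -(C/(b+1) * powFn (b+1) T) := by ring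
  have e3 : -C / (b+1) * powFn (b+1) t = -(C/(b+1) * powFn (b+1) t) := by ring
  rw [e2, e3] at h2
  rw [abs_le]
  have hcbT : 0 ≤ C/(b+1) * powFn (b+1) T := by positivity
  constructor
  · linarith [neg_abs_le (h T)]
  · linarith [le_abs_self (h T)]

/-- If `|h'| ≤ C t^b` on a tail with `b < -1` then `h` converges, with explicit rate. -/
lemma tendsto_of_deriv_le {h : ℝ → ℝ} {C b T : ℝ} (hC : 0 < C) (hb : b + 1 < 0) (hT : 0 < T)
    (hdiff : ∀ t ∈ Set.Ici T, DifferentiableAt ℝ h t)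
    (hbound : ∀ t ∈ Set.Ici T, |deriv h t| ≤ C * powFn b t) :
    ∃ L, Tendsto h atTop (nhds L) ∧
      ∀ t ≥ T, |h t - L| ≤ (C/(-(b+1))) * powFn (b+1) t := by
  have hb' : b + 1 ≠ 0 := ne_of_lt hb
  set φ : ℝ → ℝ := fun t => (C/(b+1)) * powFn (b+1) t with hφ
  have hφneg : ∀ t, φ t < 0 := fun t => by
    have := powFn_pos (b+1) t
    have : C/(b+1) < 0 := div_neg_of_pos_of_neg hC hb
    simp only [hφ]
    nlinarith [powFn_pos (b+1) t]
  have hup : AntitoneOn (fun t => h t - φ t) (Set.Ici T) :=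
    antitoneOn_sub_antideriv hb' hT hdiff
      (fun t ht => (abs_le.1 (hbound t (Set.mem_Ici.2 (le_of_lt ht)))).2)
  have hlo' := monotoneOn_sub_antideriv (a := -C) hb' hT hdiff
    (fun t ht => by
      have := (abs_le.1 (hbound t (Set.mem_Ici.2 (le_of_lt ht)))).1
      nlinarith [this])
  have hlo : MonotoneOn (fun t => h t + φ t) (Set.Ici T) := by
    intro s hs t ht hst
    have := hlo' hs ht hst
    simp only [hφ] at this ⊢
    have e : ∀ u : ℝ, h u - (-C)/(b+1) * powFn (b+1) u = h u + C/(b+1) * powFn (b+1) u := by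
      intro u; ring
    rw [e, e] at this
    exact this
  -- tilde functions
  set u : ℝ → ℝ := fun t => h (max t T) + φ (max t T) with hu
  set v : ℝ → ℝ := fun t => h (max t T) - φ (max t T) with hv
  have humono : Monotone u := fun s t hst =>
    hlo (Set.mem_Ici.2 (le_max_right _ _)) (Set.mem_Ici.2 (le_max_right _ _)) (max_le_max hst le_rfl)
  have hvanti : Antitone v := fun s t hst =>
    hup (Set.mem_Ici.2 (le_max_right _ _)) (Set.mem_Ici.2 (le_max_right _ _)) (max_le_max hst le_rfl)
  have hbdd : BddAbove (Set.range u) := by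
    refine ⟨v T, ?_⟩
    rintro x ⟨t, rfl⟩
    have h1 : u t ≤ v t := by
      simp only [hu, hv]
      nlinarith [hφneg (max t T)]
    have h2 : v t ≤ v (min t T) := hvanti (min_le_left _ _)
    have h3 : v (min t T) = v T := by
      simp only [hv]
      rw [max_eq_right (min_le_right t T)]
      rw [max_eq_right (le_refl T)]
    calc u t ≤ v t := h1
    _ ≤ v T := by rw [← h3]; exact h2
  have hulim : Tendsto u atTop (nhds (⨆ i, u i)) := tendsto_atTop_ciSup humono hbdd
  set L := ⨆ i, u i with hL
  have hφ0 : Tendsto φ atTop (nhds 0) := by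
    have := (powFn_tendsto_zero hb).const_mul (C/(b+1))
    simpa using this
  have hφmax0 : Tendsto (fun t => φ (max t T)) atTop (nhds 0) := by
    apply hφ0.congr' ?_
    filter_upwards [eventually_ge_atTop T] with t ht
    rw [max_eq_left ht]
  have hhmax : Tendsto (fun t => h (max t T)) atTop (nhds L) := by
    have := hulim.sub hφmax0
    simp only [hu, sub_zero] at this ⊢
    apply this.congr
    intro t; ring
  have hhlim : Tendsto h atTop (nhds L) := by
    apply hhmax.congr'
    filter_upwards [eventually_ge_atTop T] with t ht
    rw [max_eq_left ht]
  refine ⟨L, hhlim, ?_⟩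
  have hvlim : Tendsto v atTop (nhds L) := by
    have := hhmax.sub hφmax0
    simp only [sub_zero] at this
    exact this
  have hub : ∀ t, u t ≤ L := humono.ge_of_tendsto hulim
  have hvb : ∀ t, L ≤ v t := hvanti.le_of_tendsto hvlim
  intro t ht
  have h1 := hub t
  have h2 := hvb t
  simp only [hu, hv, max_eq_left ht] at h1 h2
  have e : C / -(b+1) * powFn (b+1) t = -(C/(b+1) * powFn (b+1) t) := by rw [div_neg]; ring
  rw [abs_le, e]
  simp only [hφ] at h1 h2
  constructor
  · linarith
  · linarith
/-- Step: from `g' / t^m → c` deduce `g / t^(m+1) → c/(m+1)`. -/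
lemma quotient_limit_step {g : ℝ → ℝ} {m c : ℝ} (hm : 0 ≤ m)
    (hdiff : ∀ᶠ t in atTop, DifferentiableAt ℝ g t)
    (hlim : Tendsto (fun t => deriv g t / powFn m t) atTop (nhds c)) :
    Tendsto (fun t => g t / powFn (m+1) t) atTop (nhds (c/(m+1))) := by
  have hm1 : 0 < m + 1 := by linarith
  rw [Metric.tendsto_atTop]
  intro ε hε
  set ε₁ := ε * (m+1)/4 with hε₁
  have hε₁0 : 0 < ε₁ := by positivity
  obtain ⟨T₀', hT₀'⟩ := Metric.tendsto_atTop.1 hlim ε₁ hε₁0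
  obtain ⟨T₀'', hT₀''⟩ := Filter.eventually_atTop.1 hdiff
  set T₀ := max 1 (max T₀' T₀'') with hT₀def
  have hT₀pos : (0:ℝ) < T₀ := lt_of_lt_of_le one_pos (le_max_left _ _)
  have hdiff' : ∀ t ∈ Set.Ici T₀, DifferentiableAt ℝ g t := fun t ht =>
    hT₀'' t (le_trans (le_trans (le_max_right _ _) (le_max_right _ _)) ht)
  have hbnd : ∀ t ∈ Set.Ioi T₀, deriv g t ≤ (c + ε₁) * powFn m t ∧
      (c - ε₁) * powFn m t ≤ deriv g t := by
    intro t ht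
    have h1 := hT₀' t (le_trans (le_trans (le_max_left _ _) (le_max_right _ _)) (le_of_lt ht))
    rw [Real.dist_eq, abs_lt] at h1
    have hp : 0 < powFn m t := powFn_pos _ _
    constructor
    · have h2 := (div_lt_iff₀ hp).1 (show deriv g t / powFn m t < c + ε₁ by linarith [h1.2])
      linarith
    · have h2 := (lt_div_iff₀ hp).1 (show c - ε₁ < deriv g t / powFn m t by linarith [h1.1])
      linarith
  have hm1' : m + 1 ≠ 0 := ne_of_gt hm1
  have hup := antitoneOn_sub_antideriv (h := g) (a := c + ε₁) (b := m) hm1' hT₀pos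
    hdiff' (fun t ht => (hbnd t ht).1)
  have hlo := monotoneOn_sub_antideriv (h := g) (a := c - ε₁) (b := m) hm1' hT₀pos
    hdiff' (fun t ht => (hbnd t ht).2)
  set D := |g T₀| + |(c + ε₁)/(m+1)| * powFn (m+1) T₀ + |(c - ε₁)/(m+1)| * powFn (m+1) T₀
    with hD
  have hD0 : 0 ≤ D := add_nonneg (add_nonneg (abs_nonneg _)
    (mul_nonneg (abs_nonneg _) (powFn_pos _ _).le))
    (mul_nonneg (abs_nonneg _) (powFn_pos _ _).le)
  clear_value D
  have hptop := powFn_tendsto_atTop hm1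
  obtain ⟨T₁, hT₁⟩ := Filter.eventually_atTop.1
    ((hptop.eventually_ge_atTop (max 1 (4*D/ε))).and (eventually_ge_atTop T₀))
  refine ⟨T₁, fun t ht => ?_⟩
  have h4 := hT₁ t ht
  have htT₀ : T₀ ≤ t := h4.2
  have hpt : 0 < powFn (m+1) t := powFn_pos _ _
  have hpT₀ : 0 < powFn (m+1) T₀ := powFn_pos _ _
  have hpt1 : (1:ℝ) ≤ powFn (m+1) t := le_trans (le_max_left _ _) h4.1
  have hptD : 4*D/ε ≤ powFn (m+1) t := le_trans (le_max_right _ _) h4.1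
  have hub := hup Set.self_mem_Ici (show t ∈ Set.Ici T₀ from htT₀) htT₀
  have hlb := hlo Set.self_mem_Ici (show t ∈ Set.Ici T₀ from htT₀) htT₀
  simp only at hub hlb
  have hDpt : D ≤ ε/4 * powFn (m+1) t := by
    rw [div_le_iff₀ hε] at hptD
    calc D ≤ (powFn (m+1) t * ε)/4 := by linarith
    _ = ε/4 * powFn (m+1) t := by ring
  have hAc : (c + ε₁)/(m+1) = c/(m+1) + ε/4 := by
    rw [hε₁, add_div, mul_comm ε (m+1), mul_div_assoc, mul_div_cancel_left₀ _ hm1']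
  have hBc : (c - ε₁)/(m+1) = c/(m+1) - ε/4 := by
    rw [hε₁, sub_div, mul_comm ε (m+1), mul_div_assoc, mul_div_cancel_left₀ _ hm1']
  have habs1 : g T₀ - (c + ε₁)/(m+1) * powFn (m+1) T₀ ≤ D := by
    have h5 : -((c + ε₁)/(m+1) * powFn (m+1) T₀) ≤ |(c + ε₁)/(m+1)| * powFn (m+1) T₀ := by
      nlinarith [mul_le_mul_of_nonneg_right (neg_le_abs ((c + ε₁)/(m+1))) hpT₀.le]
    have h6 : 0 ≤ |(c - ε₁)/(m+1)| * powFn (m+1) T₀ := by positivity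
    rw [hD]
    linarith [le_abs_self (g T₀)]
  have habs2 : -D ≤ g T₀ - (c - ε₁)/(m+1) * powFn (m+1) T₀ := by
    have h5 : (c - ε₁)/(m+1) * powFn (m+1) T₀ ≤ |(c - ε₁)/(m+1)| * powFn (m+1) T₀ :=
      mul_le_mul_of_nonneg_right (le_abs_self _) hpT₀.le
    have h6 : 0 ≤ |(c + ε₁)/(m+1)| * powFn (m+1) T₀ := by positivity
    rw [hD]
    linarith [neg_abs_le (g T₀)]
  have hgt2 : g t ≤ D + (c/(m+1) + ε/4) * powFn (m+1) t := by
    rw [← hAc]; linarith [hub, habs1]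
  have hgt3 : -D + (c/(m+1) - ε/4) * powFn (m+1) t ≤ g t := by
    rw [← hBc]; linarith [hlb, habs2]
  rw [Real.dist_eq, abs_lt]
  constructor
  · have key : (c/(m+1) - ε) * powFn (m+1) t < g t := by
      nlinarith [mul_pos hε hpt]
    have := (lt_div_iff₀ hpt).2 key
    linarith
  · have key : g t < (c/(m+1) + ε) * powFn (m+1) t := by
      nlinarith [mul_pos hε hpt]
    have := (div_lt_iff₀ hpt).2 key
    linarith

lemma IsHardyField.iter_quotient_limit (hH : IsHardyField H) {f : ℝ → ℝ} (hf : f ∈ H)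
    {k : ℕ} {c : ℝ} (hlim : Tendsto (iteratedDeriv k f) atTop (nhds c)) :
    Tendsto (fun t => f t / powFn (k:ℝ) t) atTop (nhds (c / (k.factorial : ℝ))) := by
  have main : ∀ j, j ≤ k →
      Tendsto (fun t => iteratedDeriv (k-j) f t / powFn (j:ℝ) t) atTop
        (nhds (c / (j.factorial : ℝ))) := by
    intro j
    induction j with
    | zero =>
      intro _
      simpa [powFn_zero] using hlim
    | succ n ih =>
      intro hn
      have hn' : n ≤ k := le_trans (Nat.le_succ n) hn
      have prev := ih hn'
      have hg : iteratedDeriv (k-(n+1)) f ∈ H := hH.iteratedDeriv_mem hf _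
      have hder : deriv (iteratedDeriv (k-(n+1)) f) = iteratedDeriv (k-n) f := by
        have e3 : k - n = (k - (n+1)) + 1 := by omega
        rw [e3, iteratedDeriv_succ]
      have hlim' : Tendsto (fun t => deriv (iteratedDeriv (k-(n+1)) f) t / powFn (n:ℝ) t)
          atTop (nhds (c / (n.factorial : ℝ))) := by
        rw [hder]; exact prev
      have hstep := quotient_limit_step (Nat.cast_nonneg n)
        (hH.eventuallyDifferentiable hg) hlim'
      have e1 : ((n:ℝ)+1) = ((n+1 : ℕ) : ℝ) := by push_cast; ring
      have e2 : c / (n.factorial : ℝ) / ((n:ℝ)+1) = c / (((n+1).factorial : ℝ)) := by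
        rw [div_div, Nat.factorial_succ]
        push_cast
        ring_nf
      rw [e2, e1] at hstep
      exact hstep
  have := main k le_rfl
  rw [Nat.sub_self] at this
  simpa [iteratedDeriv_zero] using this

lemma snp_exists_k₀ {f : ℝ → ℝ} (hsnp : StronglyNonPoly f) {δ : ℝ} (hδ : 0 < δ)
    (hlow : Dom (fun t => t ^ δ) f) :
    ∃ k₀ : ℕ, Prec (fun t => t ^ k₀) f ∧ Prec f (fun t => t ^ (k₀ + 1)) := by
  rcases hsnp with h | h
  · exact h
  · exfalso
    obtain ⟨C, hC, hev⟩ := hlow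
    have h1 : ∀ᶠ t in atTop, |f t| ≤ 1 := by
      have := h.abs
      simp only [abs_zero] at this
      exact this.eventually_le_const one_pos
    have h2 : ∀ᶠ t in atTop, (C + 1 : ℝ) ≤ t ^ δ :=
      (tendsto_rpow_atTop hδ).eventually_ge_atTop (C+1)
    have h3 : ∀ᶠ t in atTop, (0:ℝ) ≤ t := eventually_ge_atTop 0
    obtain ⟨t, ht1, ht2, ht3, ht4⟩ := (hev.and (h1.and (h2.and h3))).exists
    rw [abs_of_nonneg (Real.rpow_nonneg ht4 δ)] at ht1
    nlinarith

lemma IsHardyField.no_deriv_limit (hH : IsHardyField H) {f : ℝ → ℝ} (hf : f ∈ H)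
    (hsnp : StronglyNonPoly f) {δ : ℝ} (hδ : 0 < δ) (hlow : Dom (fun t => t ^ δ) f) :
    ∀ (k : ℕ) (c : ℝ), c ≠ 0 → Tendsto (iteratedDeriv k f) atTop (nhds c) → False := by
  obtain ⟨k₀, hp1, hp2⟩ := snp_exists_k₀ hsnp hδ hlow
  intro k c hc hlim
  have hq := hH.iter_quotient_limit hf hlim
  set c' := c / (k.factorial : ℝ) with hc'
  have hc'0 : c' ≠ 0 := by
    rw [hc']
    exact div_ne_zero hc (Nat.cast_ne_zero.2 (Nat.factorial_ne_zero k))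
  clear_value c' 
  have habs : Tendsto (fun t => |f t / powFn (k:ℝ) t|) atTop (nhds |c'|) := hq.abs
  have hcpos : 0 < |c'| := abs_pos.2 hc'0
  have hev1 : ∀ᶠ t in atTop, |c'|/2 ≤ |f t / powFn (k:ℝ) t| :=
    habs.eventually (eventually_ge_nhds (by linarith))
  have hev2 : ∀ᶠ t in atTop, |f t / powFn (k:ℝ) t| ≤ |c'| + 1 :=
    habs.eventually (eventually_le_nhds (by linarith))
  rcases le_or_gt k k₀ with hk | hk
  · -- t^k₀ ≺ f is contradicted
    have hsmall : ∀ᶠ t in atTop, |t ^ k₀ / f t| < (|c'|+1)⁻¹ := by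
      have := hp1
      rw [Prec] at this
      have h0 : (0:ℝ) < (|c'|+1)⁻¹ := by positivity
      have := this.abs
      simp only [abs_zero] at this
      exact this.eventually_lt_const h0
    obtain ⟨t, hlo2, hhi, hsm, ht1⟩ :=
      (hev1.and (hev2.and (hsmall.and (eventually_ge_atTop (1:ℝ))))).exists
    have htpos : (0:ℝ) < t := lt_of_lt_of_le one_pos ht1
    have hpt : 0 < powFn (k:ℝ) t := powFn_pos _ _
    have hfne : f t ≠ 0 := by
      intro h0
      rw [h0] at hlo2
      simp at hlo2
      linarith
    have hfabs : 0 < |f t| := abs_pos.2 hfne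
    -- |f t| ≤ (|c'|+1) * powFn k t
    have hfb : |f t| ≤ (|c'|+1) * powFn (k:ℝ) t := by
      rw [abs_div, abs_of_pos hpt, div_le_iff₀ hpt] at hhi
      linarith
    -- |t^k₀ / f t| ≥ t^k₀ / ((|c'|+1) * powFn k t) ≥ 1/(|c'|+1)
    have e1 : |t ^ k₀ / f t| = t ^ k₀ / |f t| := by
      rw [abs_div, abs_of_nonneg (pow_nonneg htpos.le k₀)]
    have e2 : powFn (k:ℝ) t = t ^ k := powFn_natCast htpos k
    have hge : t ^ k₀ / |f t| ≥ (|c'|+1)⁻¹ := by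
      have hpow : t ^ k ≤ t ^ k₀ := pow_le_pow_right₀ ht1 hk
      have h8 : |f t| ≤ (|c'|+1) * t ^ k₀ := by
        rw [e2] at hfb
        nlinarith [hfb]
      rw [ge_iff_le, le_div_iff₀ hfabs]
      have hinv := mul_inv_cancel₀ (ne_of_gt (by positivity : (0:ℝ) < |c'|+1))
      nlinarith [pow_pos htpos k₀, inv_pos.2 (by positivity : (0:ℝ) < |c'|+1)]
    rw [e1] at hsm
    linarith [hge]
  · -- f ≺ t^(k₀+1) is contradicted
    have hsmall : ∀ᶠ t in atTop, |f t / t ^ (k₀+1)| < |c'|/2 := by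
      have := hp2.abs
      simp only [abs_zero] at this
      exact this.eventually_lt_const (by linarith)
    obtain ⟨t, hlo2, hsm, ht1⟩ := (hev1.and (hsmall.and (eventually_ge_atTop (1:ℝ)))).exists
    have htpos : (0:ℝ) < t := lt_of_lt_of_le one_pos ht1
    have hpt : 0 < powFn (k:ℝ) t := powFn_pos _ _
    have e2 : powFn (k:ℝ) t = t ^ k := powFn_natCast htpos k
    -- |f t| ≥ (|c'|/2) * t^k
    have hfb : (|c'|/2) * t ^ k ≤ |f t| := by
      rw [abs_div, abs_of_pos hpt, le_div_iff₀ hpt] at hlo2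
      rw [e2] at hlo2
      linarith
    have hmono : t ^ (k₀+1) ≤ t ^ k := pow_le_pow_right₀ ht1 hk
    have hptk : (0:ℝ) < t ^ (k₀+1) := pow_pos htpos _
    have : |c'|/2 ≤ |f t / t ^ (k₀+1)| := by
      rw [abs_div, abs_of_pos hptk, le_div_iff₀ hptk]
      calc |c'|/2 * t ^ (k₀+1) ≤ |c'|/2 * t ^ k := by
            apply mul_le_mul_of_nonneg_left hmono (by positivity)
      _ ≤ |f t| := hfb
    linarith

lemma dom_powFn_mono {g : ℝ → ℝ} {a b : ℝ} (hba : b ≤ a) (h : Dom (powFn a) g) :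
    Dom (powFn b) g := (dom_powFn_of_le hba).trans h

lemma IsHardyField.lower_bound (hH : IsHardyField H) (hLE : ContainsLE H)
    {f : ℝ → ℝ} (hf : f ∈ H) (hsnp : StronglyNonPoly f) {δ : ℝ} (hδ : 0 < δ)
    (hlow : Dom (fun t => t ^ δ) f) :
    ∀ k : ℕ, ∀ γ : ℝ, 0 < γ → Dom (powFn (δ - k - γ)) (iteratedDeriv k f) := by
  intro k
  induction k with
  | zero =>
    intro γ hγ
    obtain ⟨C, hC, hev⟩ := hlow
    refine ⟨C, hC, ?_⟩
    filter_upwards [hev, eventually_ge_atTop (1:ℝ)] with t ht h1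
    have htpos : (0:ℝ) < t := lt_of_lt_of_le one_pos h1
    rw [abs_of_pos (powFn_pos _ _)]
    have e1 : powFn (δ - 0 - γ) t ≤ powFn δ t := powFn_le_powFn h1 (by push_cast; linarith)
    have e2 : |t ^ δ| = t ^ δ := abs_of_pos (Real.rpow_pos_of_pos htpos δ)
    rw [e2, ← powFn_eq_rpow htpos δ] at ht
    simp only [iteratedDeriv_zero]
    push_cast at e1 ⊢
    linarith
  | succ k ih =>
    intro γ hγ
    -- choose γ' ≤ γ with δ - k - γ' ≠ 0
    obtain ⟨γ', hγ'0, hγ'le, hβne⟩ : ∃ γ', 0 < γ' ∧ γ' ≤ γ ∧ δ - k - γ' ≠ 0 := by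
      by_cases hcase : δ - (k:ℝ) - γ/2 = 0
      · refine ⟨γ/3, by linarith, by linarith, ?_⟩
        rw [show δ - (k:ℝ) - γ/3 = (δ - (k:ℝ) - γ/2) + γ/6 from by ring, hcase, zero_add]
        exact ne_of_gt (by linarith)
      · exact ⟨γ/2, by linarith, by linarith, hcase⟩
    set β := δ - (k:ℝ) - γ' with hβ
    have hmem : iteratedDeriv (k+1) f ∈ H := hH.iteratedDeriv_mem hf (k+1)
    have hcast : ((k+1 : ℕ) : ℝ) = (k:ℝ) + 1 := by push_cast; ring
    have hbeq : δ - ((k+1:ℕ):ℝ) - γ' = β - 1 := by rw [hcast, hβ]; ring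
    rcases hH.dom_trichotomy hLE hmem (δ - ((k+1:ℕ):ℝ) - γ') with hL | hU
    · exact dom_powFn_mono (by linarith) hL
    · exfalso
      obtain ⟨C, hC, hevU⟩ := hU
      rw [hbeq] at hevU
      have hdk := hH.eventuallyDifferentiable (hH.iteratedDeriv_mem hf k)
      have ihh := ih (γ'/2) (by linarith)
      obtain ⟨C₂, hC₂, hev₂⟩ := ihh
      obtain ⟨T₀, hT₀⟩ := Filter.eventually_atTop.1 ((hevU.and hdk).and hev₂)
      set T := max 1 T₀ with hTdef
      have hTpos : (0:ℝ) < T := lt_of_lt_of_le one_pos (le_max_left _ _)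
      have hdiff' : ∀ t ∈ Set.Ici T, DifferentiableAt ℝ (iteratedDeriv k f) t := fun t ht =>
        (hT₀ t (le_trans (le_max_right _ _) ht)).1.2
      have hbound : ∀ t ∈ Set.Ici T, |deriv (iteratedDeriv k f) t| ≤ C * powFn (β-1) t := by
        intro t ht
        have := (hT₀ t (le_trans (le_max_right _ _) ht)).1.1
        rw [← iteratedDeriv_succ]
        rwa [abs_of_pos (powFn_pos _ _)] at this
      have hlow₂ : ∀ t, T ≤ t → powFn (β + γ'/2) t ≤ C₂ * |iteratedDeriv k f t| := by
        intro t ht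
        have := (hT₀ t (le_trans (le_max_right _ _) ht)).2
        rw [abs_of_pos (powFn_pos _ _)] at this
        have e : δ - (k:ℝ) - γ'/2 = β + γ'/2 := by rw [hβ]; ring
        rwa [e] at this
      have hsplit : ∀ t : ℝ, powFn (β + γ'/2) t = powFn (γ'/2) t * powFn β t := by
        intro t
        rw [show β + γ'/2 = γ'/2 + β from by ring, powFn_add]
      rcases lt_trichotomy β 0 with hβneg | hβzero | hβpos
      · -- convergence case
        obtain ⟨L, hLlim, hLbd⟩ := tendsto_of_deriv_le hC
          (show (β-1) + 1 < 0 from by linarith) hTpos hdiff' hbound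
        rcases eq_or_ne L 0 with rfl | hL0
        · -- f^(k) → 0 with rate
          obtain ⟨t, hgt, htT⟩ :=
            (((powFn_tendsto_atTop (by linarith : (0:ℝ) < γ'/2)).eventually_gt_atTop
              (C₂ * (C/(-(β-1+1))))).and (eventually_ge_atTop T)).exists
          have h1 := hlow₂ t htT
          have h2 := hLbd t htT
          rw [sub_zero] at h2
          have h3 := hsplit t
          have hpβ : 0 < powFn β t := powFn_pos _ _
          have e4 : β - 1 + 1 = β := by ring
          rw [e4] at h2 hgt
          nlinarith [powFn_pos (γ'/2) t, mul_le_mul_of_nonneg_left h2 hC₂.le]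
        · exact hH.no_deriv_limit hf hsnp hδ hlow k L hL0 hLlim
      · exact hβne (by rw [hβ] at hβzero; linarith [hβzero])
      · -- growth case
        have hble := abs_le_of_deriv_le hC (show (0:ℝ) < (β-1)+1 from by linarith)
          hTpos hdiff' hbound
        have e4 : β - 1 + 1 = β := by ring
        obtain ⟨t, hgt, htT⟩ :=
          (((powFn_tendsto_atTop (by linarith : (0:ℝ) < γ'/2)).eventually_gt_atTop
            (C₂ * (|iteratedDeriv k f T| + C/β * powFn β T) + C₂ * (C/β))).and
            (eventually_ge_atTop T)).exists
        have h2 := hble t htT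
        rw [e4] at h2
        have h1 := hlow₂ t htT
        have h3 := hsplit t
        have hpβ : 0 < powFn β t := powFn_pos _ _
        have h4 : (1:ℝ) ≤ powFn β t := by
          have := powFn_le_powFn (le_trans (le_max_left _ _) htT : (1:ℝ) ≤ t) hβpos.le
          rwa [powFn_zero] at this
        have hK0 : 0 ≤ |iteratedDeriv k f T| + C/β * powFn β T :=
          add_nonneg (abs_nonneg _) (mul_nonneg (div_nonneg hC.le hβpos.le) (powFn_pos β T).le)
        have hC'0 : (0:ℝ) ≤ C/β := div_nonneg hC.le hβpos.le
        nlinarith [mul_le_mul_of_nonneg_left h2 hC₂.le,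
          mul_nonneg (mul_nonneg hC₂.le hK0) (show (0:ℝ) ≤ powFn β t - 1 from by linarith),
          mul_pos (show (0:ℝ) < powFn (γ'/2) t -
            (C₂ * (|iteratedDeriv k f T| + C/β * powFn β T) + C₂ * (C/β)) from by linarith) hpβ]

lemma IsHardyField.upper_bound (hH : IsHardyField H) {f : ℝ → ℝ} (hf : f ∈ H) {B : ℝ}
    (h : Dom f (powFn B)) : ∀ k : ℕ, Dom (iteratedDeriv k f) (powFn (B - k)) := by
  intro k
  induction k with
  | zero => simpa [iteratedDeriv_zero] using h
  | succ n ih =>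
    have := hH.deriv_dom (hH.iteratedDeriv_mem hf n) ih
    rw [← iteratedDeriv_succ] at this
    have e : B - ((n+1:ℕ):ℝ) = B - (n:ℝ) - 1 := by push_cast; ring
    rwa [e]
theorem stmt_5 (H : Set (ℝ → ℝ)) (hH : IsHardyField H) (hLE : ContainsLE H)
    (f : ℝ → ℝ) (hf : f ∈ H) (hsnp : StronglyNonPoly f)
    (δ : ℝ) (hδ : 0 < δ) (hlow : Dom (fun t => t ^ δ) f) :
    ∃ K : ℕ, ∀ k : ℕ, K ≤ k → (SClass H f k).Nonempty := by
  obtain ⟨k₀, hp1, hp2⟩ := snp_exists_k₀ hsnp hδ hlow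
  have hup0 : Dom f (powFn ((k₀:ℝ)+1)) := by
    refine ⟨1, one_pos, ?_⟩
    have h1 : ∀ᶠ t in atTop, |f t / t ^ (k₀+1)| ≤ 1 := by
      have := hp2.abs
      simp only [abs_zero] at this
      exact this.eventually_le_const one_pos
    filter_upwards [h1, eventually_ge_atTop (1:ℝ)] with t ht h1t
    have htpos : (0:ℝ) < t := lt_of_lt_of_le one_pos h1t
    have hpk : (0:ℝ) < t ^ (k₀+1) := pow_pos htpos _
    rw [abs_div, abs_of_pos hpk, div_le_one hpk] at ht
    rw [abs_of_pos (powFn_pos _ _), one_mul]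
    have : powFn ((k₀:ℝ)+1) t = t ^ (k₀+1) := by
      have := powFn_natCast htpos (k₀+1)
      rwa [show (((k₀+1:ℕ)):ℝ) = (k₀:ℝ)+1 from by push_cast; ring] at this
    rw [this]
    exact ht
  have hupk := hH.upper_bound hf hup0
  set E : ℕ → Set ℝ := fun k => {x | Dom (powFn x) (iteratedDeriv k f)} with hE
  have hlb := hH.lower_bound hLE hf hsnp hδ hlow
  have hEne : ∀ k, (E k).Nonempty := fun k => ⟨δ - k - 1, hlb k 1 one_pos⟩
  have hEbdd : ∀ k, BddAbove (E k) := by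
    intro k
    refine ⟨(k₀:ℝ)+1-k, fun x hx => ?_⟩
    exact le_of_dom_powFn (Dom.trans hx (hupk k))
  set a : ℕ → ℝ := fun k => sSup (E k) with ha
  have ha_lower : ∀ k : ℕ, δ - k ≤ a k := by
    intro k
    by_contra hcon
    push_neg at hcon
    have h1 : δ - k - (δ - k - a k)/2 ∈ E k := hlb k _ (by linarith)
    have h2 := le_csSup (hEbdd k) h1
    have h3 : δ - (k:ℝ) - (δ - (k:ℝ) - a k)/2 ≤ a k := by rw [ha]; exact h2
    linarith
  have hmem_of_lt : ∀ (k : ℕ) (x : ℝ), x < a k → Dom (powFn x) (iteratedDeriv k f) := by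
    intro k x hx
    obtain ⟨x', hx'E, hxx'⟩ := exists_lt_of_lt_csSup (hEne k) hx
    exact dom_powFn_mono hxx'.le hx'E
  have hup_of_gt : ∀ (k : ℕ) (x : ℝ), a k < x → Dom (iteratedDeriv k f) (powFn x) := by
    intro k x hx
    rcases hH.dom_trichotomy hLE (hH.iteratedDeriv_mem hf k) x with h | h
    · exact absurd (le_csSup (hEbdd k) h) (not_le.2 hx)
    · exact h
  have ha_rel : ∀ k : ℕ, a (k+1) ≤ a k - 1 := by
    intro k
    by_contra hcon
    push_neg at hcon
    set b := (a k + a (k+1) + 1)/2 with hb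
    have hb1 : a k < b := by rw [hb]; linarith
    have hb2 : b - 1 < a (k+1) := by rw [hb]; linarith
    have hdom := hH.deriv_dom (hH.iteratedDeriv_mem hf k) (hup_of_gt k b hb1)
    rw [← iteratedDeriv_succ] at hdom
    have hle : a (k+1) ≤ b - 1 :=
      csSup_le (hEne (k+1)) (fun x hx => le_of_dom_powFn (Dom.trans hx hdom))
    linarith
  refine ⟨1, fun k hk => ?_⟩
  have hkR : (1:ℝ) ≤ (k:ℝ) := by exact_mod_cast hk
  have hkR0 : (0:ℝ) < (k:ℝ) := by linarith
  have hkR1 : (0:ℝ) < (k:ℝ) + 1 := by linarith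
  set ak := a k with hak
  set ak1 := a (k+1) with hak1
  have hlow_k : δ - k ≤ ak := ha_lower k
  have hlow_k1 : δ - ((k:ℝ)+1) ≤ ak1 := by
    have := ha_lower (k+1)
    rwa [show ((k+1:ℕ):ℝ) = (k:ℝ)+1 from by push_cast; ring] at this
  have hrel : ak1 ≤ ak - 1 := ha_rel k
  have hakk : -ak < (k:ℝ) := by linarith
  have hgap : -ak/(k:ℝ) < -ak1/((k:ℝ)+1) := by
    rw [div_lt_div_iff₀ hkR0 hkR1]
    nlinarith
  set θ := (-ak/(k:ℝ) + -ak1/((k:ℝ)+1))/2 with hθdef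
  have hθltB : θ < -ak1/((k:ℝ)+1) := by rw [hθdef]; linarith
  have hθgtA : -ak/(k:ℝ) < θ := by rw [hθdef]; linarith
  have hB1 : -ak1/((k:ℝ)+1) < 1 := by
    rw [div_lt_one hkR1]; linarith
  have hθ1 : θ < 1 := lt_trans hθltB hB1
  have hε₀pos : 0 < (θ*(k:ℝ) + ak)/2 := by
    have := (div_lt_iff₀ hkR0).1 hθgtA
    linarith
  set ε₀ := (θ*(k:ℝ) + ak)/2 with hε₀def
  have hε₁pos : 0 < (-(θ*((k:ℝ)+1)) - ak1)/2 := by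
    have := (lt_div_iff₀ hkR1).1 hθltB
    linarith
  set ε₁ := (-(θ*((k:ℝ)+1)) - ak1)/2 with hε₁def
  refine ⟨powFn θ, powFn_mem hLE θ, ?_, Or.inr (Or.inl ?_), ?_⟩
  · -- g ≺ t
    show Tendsto (fun t => powFn θ t / t) atTop (nhds 0)
    apply (powFn_tendsto_zero (show θ - 1 < 0 from by linarith)).congr'
    filter_upwards [eventually_ge_atTop (1:ℝ)] with t ht
    have htpos : (0:ℝ) < t := lt_of_lt_of_le one_pos ht
    rw [eq_div_iff (ne_of_gt htpos)]
    exact (powFn_succ htpos θ).symm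
  · -- g * |f^(k)|^(1/k) → ∞
    obtain ⟨C, hC, hev⟩ := hmem_of_lt k (ak - ε₀) (by linarith)
    have hCe : (0:ℝ) < C ^ ((k:ℝ)⁻¹) := Real.rpow_pos_of_pos hC _
    have main : Tendsto (fun t => powFn (ε₀/(k:ℝ)) t * (C ^ ((k:ℝ)⁻¹))⁻¹) atTop atTop :=
      (powFn_tendsto_atTop (by positivity)).atTop_mul_const (inv_pos.2 hCe)
    apply tendsto_atTop_mono' atTop ?_ main
    filter_upwards [hev, eventually_ge_atTop (1:ℝ)] with t hevt ht
    have htpos : (0:ℝ) < t := lt_of_lt_of_le one_pos ht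
    set x := |iteratedDeriv k f t| with hx
    have hx0 : 0 ≤ x := abs_nonneg _
    have hp : 0 < powFn (ak - ε₀) t := powFn_pos _ _
    have hineq : powFn (ak - ε₀) t ≤ C * x := by
      rwa [abs_of_pos hp] at hevt
    have h5 : powFn (ak - ε₀) t / C ≤ x := by
      rw [div_le_iff₀ hC]; linarith
    have h6 : (powFn (ak - ε₀) t / C) ^ ((k:ℝ)⁻¹) ≤ x ^ ((k:ℝ)⁻¹) :=
      Real.rpow_le_rpow (by positivity) h5 (by positivity)
    rw [Real.div_rpow hp.le hC.le, powFn_rpow] at h6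
    have earg : θ + (ak - ε₀) * (k:ℝ)⁻¹ = ε₀/(k:ℝ) := by
      rw [hε₀def]
      field_simp
      ring
    calc powFn (ε₀/(k:ℝ)) t * (C ^ ((k:ℝ)⁻¹))⁻¹
        = powFn θ t * (powFn ((ak - ε₀) * (k:ℝ)⁻¹) t / C ^ ((k:ℝ)⁻¹)) := by
          rw [← earg, powFn_add, mul_assoc, div_eq_mul_inv]
    _ ≤ powFn θ t * x ^ ((k:ℝ)⁻¹) :=
          mul_le_mul_of_nonneg_left h6 (powFn_pos θ t).le
  · -- g ≺ |f^(k+1)|^(-1/(k+1))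
    have hκcast : ((k+1:ℕ):ℝ) = (k:ℝ)+1 := by push_cast; ring
    obtain ⟨C₃, hC₃, hev₃⟩ := hup_of_gt (k+1) (ak1 + ε₁) (by linarith)
    have hC₃e : (0:ℝ) < C₃ ^ (((k:ℝ)+1)⁻¹) := Real.rpow_pos_of_pos hC₃ _
    have hexpneg : θ + (ak1 + ε₁) * ((k:ℝ)+1)⁻¹ < 0 := by
      have h9 : (θ + (ak1 + ε₁) * ((k:ℝ)+1)⁻¹) * ((k:ℝ)+1) =
          θ*((k:ℝ)+1) + ak1 + ε₁ := by
        field_simp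
        ring
      have h10 : θ*((k:ℝ)+1) + ak1 + ε₁ = -ε₁ := by rw [hε₁def]; ring
      by_contra hcon
      push_neg at hcon
      have h11 := mul_nonneg hcon hkR1.le
      rw [h9, h10] at h11
      linarith
    have hbndlim : Tendsto (fun t => C₃ ^ (((k:ℝ)+1)⁻¹) *
        powFn (θ + (ak1 + ε₁) * ((k:ℝ)+1)⁻¹) t) atTop (nhds 0) := by
      have := (powFn_tendsto_zero hexpneg).const_mul (C₃ ^ (((k:ℝ)+1)⁻¹))
      simpa using this
    apply squeeze_zero' ?_ ?_ hbndlim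
    · filter_upwards with t
      exact div_nonneg (powFn_pos θ t).le (Real.rpow_nonneg (abs_nonneg _) _)
    · filter_upwards [hev₃, eventually_ge_atTop (1:ℝ)] with t hevt ht
      have htpos : (0:ℝ) < t := lt_of_lt_of_le one_pos ht
      set x := |iteratedDeriv (k+1) f t| with hx
      have hx0 : 0 ≤ x := abs_nonneg _
      have hpb : 0 < powFn (ak1 + ε₁) t := powFn_pos _ _
      have hineq : x ≤ C₃ * powFn (ak1 + ε₁) t := by
        rwa [abs_of_pos hpb] at hevt
      have hee : -(1:ℝ)/((k:ℝ)+1) = -(((k:ℝ)+1)⁻¹) := by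
        rw [neg_div, one_div]
      rcases eq_or_lt_of_le hx0 with hxz | hxpos
      · rw [show x ^ (-(1:ℝ)/((k:ℝ)+1)) = (0:ℝ) from by
            rw [← hxz, Real.zero_rpow (by
              rw [hee]; exact neg_ne_zero.2 (ne_of_gt (by positivity)))]]
        rw [div_zero]
        exact mul_nonneg (Real.rpow_nonneg hC₃.le _) (powFn_pos _ _).le
      · rw [hee, Real.rpow_neg hx0, div_eq_mul_inv, inv_inv]
        have h6 : x ^ (((k:ℝ)+1)⁻¹) ≤ (C₃ * powFn (ak1 + ε₁) t) ^ (((k:ℝ)+1)⁻¹) :=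
          Real.rpow_le_rpow hx0 hineq (by positivity)
        rw [Real.mul_rpow hC₃.le hpb.le, powFn_rpow] at h6
        calc powFn θ t * x ^ (((k:ℝ)+1)⁻¹)
            ≤ powFn θ t * (C₃ ^ (((k:ℝ)+1)⁻¹) * powFn ((ak1 + ε₁) * ((k:ℝ)+1)⁻¹) t) :=
              mul_le_mul_of_nonneg_left h6 (powFn_pos θ t).le
        _ = C₃ ^ (((k:ℝ)+1)⁻¹) * powFn (θ + (ak1 + ε₁) * ((k:ℝ)+1)⁻¹) t := by
              rw [powFn_add]
              ring

end
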